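/- Let Q ⊂ ℝ³ be a (solid) regular tetrahedron of side length ℓ and let Π be any affine plane in ℝ³ that does not contain any face of Q. Then the 1-dimensional Hausdorff measure (length) of Π ∩ ∂Q is at most 3ℓ, i.e. the perimeter of the planar cross-section Π ∩ Q is at most 3ℓ. -/

import Mathlib

open MeasureTheory
open scoped RealInnerProductSpace

open Set

noncomputable section

local notation "E3" => EuclideanSpace ℝ (Fin 3)





lemma singleton_hm (x : E3) : μH[1] ({x} : Set E3) = 0 := by
  have := MeasureTheory.hausdorffMeasure_affineSegment (x := x) (y := x)
  rwa [affineSegment_same, edist_self] at this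

lemma line_measure_le (T : Set E3) (x v : E3)
    (hline : ∀ q ∈ T, ∃ s : ℝ, q = x + s • v)
    (B : ℝ)
    (hpair : ∀ q ∈ T, ∀ q' ∈ T, dist q q' ≤ B) :
    μH[1] T ≤ ENNReal.ofReal B := by
  rcases eq_or_ne v 0 with hv | hv
  · have hT : T ⊆ {x} := fun q hq => by
      rcases hline q hq with ⟨s, rfl⟩; simp [hv]
    calc μH[1] T ≤ μH[1] ({x} : Set E3) := measure_mono hT
      _ = 0 := singleton_hm x
      _ ≤ _ := zero_le
  · set u : E3 := ‖v‖⁻¹ • v with hu_def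
    have hu : ‖u‖ = 1 := norm_smul_inv_norm hv
    set f : ℝ → E3 := fun s => x + s • u with hf
    have hiso : Isometry f := by
      apply Isometry.of_dist_eq
      intro a b
      have : f a - f b = (a - b) • u := by simp only [hf]; module
      rw [dist_eq_norm, this, norm_smul, hu, mul_one, Real.norm_eq_abs, Real.dist_eq]
    have hTim : T = f '' (f ⁻¹' T) := by
      apply Subset.antisymm
      · intro q hq
        rcases hline q hq with ⟨s, rfl⟩
        refine ⟨s * ‖v‖, ?_, ?_⟩
        · show f _ ∈ T
          have : f (s * ‖v‖) = x + s • v := by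
            simp only [hf, hu_def, smul_smul]
            rw [mul_assoc, mul_inv_cancel₀ (norm_ne_zero_iff.2 hv), mul_one]
          rw [this]; exact hq
        · simp only [hf, hu_def, smul_smul]
          rw [mul_assoc, mul_inv_cancel₀ (norm_ne_zero_iff.2 hv), mul_one]
      · exact image_preimage_subset f T
    rw [hTim, hiso.hausdorffMeasure_image (Or.inl zero_le_one)]
    rw [MeasureTheory.hausdorffMeasure_real]
    calc volume (f ⁻¹' T) ≤ EMetric.diam (f ⁻¹' T) := Real.volume_le_diam _
      _ ≤ ENNReal.ofReal B := by
          apply EMetric.diam_le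
          intro a ha b hb
          rw [edist_dist, ← hiso.dist_eq a b]
          exact ENNReal.ofReal_le_ofReal (hpair _ ha _ hb)


-- core quadratic bound
lemma core_alg (K L g x y : ℝ) (hK : 0 < K) (hKL : K ≤ L)
    (hrel : K*x + L*y = 0) (hx : K^2*x^2 ≤ g^2) :
    K^2 * (x^2 + y^2 + (x+y)^2) ≤ 2*g^2 := by
  have hL : 0 < L := lt_of_lt_of_le hK hKL
  have h1 : L^2 * (K^2 * (x^2 + y^2 + (x+y)^2)) = K^2*x^2*(L^2 + K^2 + (L-K)^2) := by
    linear_combination (K^2*(L*y - K*x) + K^2*(2*L*x + L*y - K*x)) * hrel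
  have h2 : K^2*x^2*(L^2 + K^2 + (L-K)^2) ≤ g^2*(L^2 + K^2 + (L-K)^2) := by
    have hfac : 0 ≤ L^2 + K^2 + (L-K)^2 := by positivity
    nlinarith
  have h4 : 0 ≤ g^2*K*(L-K) := by
    have : 0 ≤ g^2 := sq_nonneg g
    have : 0 ≤ L - K := by linarith
    positivity
  have h3 : g^2*(L^2 + K^2 + (L-K)^2) ≤ 2*g^2*L^2 := by nlinarith [h4]
  have h5 : L^2 * (K^2 * (x^2 + y^2 + (x+y)^2)) ≤ L^2 * (2*g^2) := by nlinarith [h1, h2, h3]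
  exact le_of_mul_le_mul_left h5 (by positivity)

-- generic simplex bound
lemma pair_generic (a0 a1 a2 b0 b1 b2 : ℝ)
    (ha0 : 0 ≤ a0) (ha1 : 0 ≤ a1) (ha2 : 0 ≤ a2)
    (hb0 : 0 ≤ b0) (hb1 : 0 ≤ b1) (hb2 : 0 ≤ b2)
    (hsa : a0+a1+a2 = 1) (hsb : b0+b1+b2 = 1) :
    (a0-b0)^2 + (a1-b1)^2 + (a2-b2)^2 ≤ 2 := by
  nlinarith [mul_nonneg ha0 ha1, mul_nonneg ha0 ha2, mul_nonneg ha1 ha2,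
    mul_nonneg hb0 hb1, mul_nonneg hb0 hb2, mul_nonneg hb1 hb2,
    mul_nonneg ha0 hb0, mul_nonneg ha1 hb1, mul_nonneg ha2 hb2]

-- point case: first value 0, other two same sign
lemma pair_point (v w a0 a1 a2 b0 b1 b2 : ℝ) (hvw : 0 < v*w)
    (ha1 : 0 ≤ a1) (ha2 : 0 ≤ a2) (hb1 : 0 ≤ b1) (hb2 : 0 ≤ b2)
    (hsa : a0+a1+a2 = 1) (hsb : b0+b1+b2 = 1)
    (hta : a1*v + a2*w = 0) (htb : b1*v + b2*w = 0) :
    (a0-b0)^2 + (a1-b1)^2 + (a2-b2)^2 ≤ 0 := by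
  have h : ∀ x y : ℝ, 0 ≤ x → 0 ≤ y → x*v + y*w = 0 → x = 0 ∧ y = 0 := by
    intro x y hx hy hxy
    rcases lt_trichotomy v 0 with hv | hv | hv
    · have hw : w < 0 := by nlinarith
      constructor <;> nlinarith
    · rw [hv] at hvw; simp at hvw
    · have hw : 0 < w := by nlinarith
      constructor <;> nlinarith
  obtain ⟨h1, h2⟩ := h a1 a2 ha1 ha2 hta
  obtain ⟨h3, h4⟩ := h b1 b2 hb1 hb2 htb
  have : a0 = b0 := by linarith
  simp [h1, h2, h3, h4, this]

-- quad case A : values (u, v, w), 0 < u ≤ v, w < 0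
lemma pair_quadA (u v w a0 a1 a2 b0 b1 b2 : ℝ)
    (hu : 0 < u) (huv : u ≤ v) (hw : w < 0)
    (ha0 : 0 ≤ a0) (ha1 : 0 ≤ a1) (ha2 : 0 ≤ a2)
    (hb0 : 0 ≤ b0) (hb1 : 0 ≤ b1) (hb2 : 0 ≤ b2)
    (hsa : a0+a1+a2 = 1) (hsb : b0+b1+b2 = 1)
    (hta : a0*u + a1*v + a2*w = 0) (htb : b0*u + b1*v + b2*w = 0) :
    (u-w)^2 * ((a0-b0)^2 + (a1-b1)^2 + (a2-b2)^2) ≤ 2*w^2 := by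
  have hK : 0 < u - w := by linarith
  have hKL : u - w ≤ v - w := by linarith
  have hL : 0 < v - w := by linarith
  have e1 : (u-w)*a0 + (v-w)*a1 = -w := by linear_combination hta - w*hsa
  have e2 : (u-w)*b0 + (v-w)*b1 = -w := by linear_combination htb - w*hsb
  have hrel : (u-w)*(a0-b0) + (v-w)*(a1-b1) = 0 := by linear_combination e1 - e2
  have p1 : 0 ≤ (u-w)*a0 := mul_nonneg hK.le ha0
  have p2 : 0 ≤ (u-w)*b0 := mul_nonneg hK.le hb0
  have q1 : (u-w)*a0 ≤ -w := by nlinarith [mul_nonneg hL.le ha1]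
  have q2 : (u-w)*b0 ≤ -w := by nlinarith [mul_nonneg hL.le hb1]
  have A : 0 ≤ -w - ((u-w)*a0 - (u-w)*b0) := by linarith
  have Bq : 0 ≤ -w + ((u-w)*a0 - (u-w)*b0) := by linarith
  have hx : (u-w)^2*(a0-b0)^2 ≤ (-w)^2 := by nlinarith [mul_nonneg A Bq]
  have hcore := core_alg (u-w) (v-w) (-w) (a0-b0) (a1-b1) hK hKL hrel hx
  have h3 : (u-w)^2 * ((a0-b0)^2 + (a1-b1)^2 + (a2-b2)^2)
      = (u-w)^2 * ((a0-b0)^2 + (a1-b1)^2 + ((a0-b0)+(a1-b1))^2) := by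
    have h2 : a2 - b2 = -((a0-b0)+(a1-b1)) := by linarith
    rw [h2]; ring
  have h4 : (-w)^2 = w^2 := by ring
  linarith [hcore]

-- quad case B : values (u, v, w), 0 < u, v ≤ w < 0
lemma pair_quadB (u v w a0 a1 a2 b0 b1 b2 : ℝ)
    (hu : 0 < u) (hvw : v ≤ w) (hw : w < 0)
    (ha0 : 0 ≤ a0) (ha1 : 0 ≤ a1) (ha2 : 0 ≤ a2)
    (hb0 : 0 ≤ b0) (hb1 : 0 ≤ b1) (hb2 : 0 ≤ b2)
    (hsa : a0+a1+a2 = 1) (hsb : b0+b1+b2 = 1)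
    (hta : a0*u + a1*v + a2*w = 0) (htb : b0*u + b1*v + b2*w = 0) :
    (u-w)^2 * ((a0-b0)^2 + (a1-b1)^2 + (a2-b2)^2) ≤ 2*u^2 := by
  have hK : 0 < u - w := by linarith
  have hKL : u - w ≤ u - v := by linarith
  have hL : 0 < u - v := by linarith
  have e1 : (u-v)*a1 + (u-w)*a2 = u := by linear_combination u*hsa - hta
  have e2 : (u-v)*b1 + (u-w)*b2 = u := by linear_combination u*hsb - htb
  have hrel : (u-w)*(a2-b2) + (u-v)*(a1-b1) = 0 := by linear_combination e1 - e2
  have p1 : 0 ≤ (u-w)*a2 := mul_nonneg hK.le ha2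
  have p2 : 0 ≤ (u-w)*b2 := mul_nonneg hK.le hb2
  have q1 : (u-w)*a2 ≤ u := by nlinarith [mul_nonneg hL.le ha1]
  have q2 : (u-w)*b2 ≤ u := by nlinarith [mul_nonneg hL.le hb1]
  have A : 0 ≤ u - ((u-w)*a2 - (u-w)*b2) := by linarith
  have Bq : 0 ≤ u + ((u-w)*a2 - (u-w)*b2) := by linarith
  have hx : (u-w)^2*(a2-b2)^2 ≤ u^2 := by nlinarith [mul_nonneg A Bq]
  have hcore := core_alg (u-w) (u-v) u (a2-b2) (a1-b1) hK hKL hrel hx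
  have h3 : (u-w)^2 * ((a0-b0)^2 + (a1-b1)^2 + (a2-b2)^2)
      = (u-w)^2 * ((a2-b2)^2 + (a1-b1)^2 + ((a2-b2)+(a1-b1))^2) := by
    have h2 : a0 - b0 = -((a2-b2)+(a1-b1)) := by linarith
    rw [h2]; ring
  linarith [hcore]




lemma inner_dist_eq (x y : E3) (ℓ : ℝ) (h : dist x y = ℓ) :
    ⟪x,x⟫ - ⟪x,y⟫ - ⟪y,x⟫ + ⟪y,y⟫ = ℓ^2 := by
  rw [dist_eq_norm] at h
  have h2 : ⟪x - y, x - y⟫ = ℓ^2 := by rw [real_inner_self_eq_norm_sq, h]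
  rw [inner_sub_left, inner_sub_right, inner_sub_right] at h2
  linear_combination h2

lemma dist_sq_formula3 (ℓ : ℝ) (P0 P1 P2 : E3)
    (h01 : dist P0 P1 = ℓ) (h02 : dist P0 P2 = ℓ) (h12 : dist P1 P2 = ℓ)
    (a0 a1 a2 b0 b1 b2 : ℝ) (hsa : a0+a1+a2 = 1) (hsb : b0+b1+b2 = 1) :
    dist (a0•P0+a1•P1+a2•P2) (b0•P0+b1•P1+b2•P2)^2
      = ℓ^2/2*((a0-b0)^2+(a1-b1)^2+(a2-b2)^2) := by
  have e01 := inner_dist_eq P0 P1 ℓ h01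
  have e02 := inner_dist_eq P0 P2 ℓ h02
  have e12 := inner_dist_eq P1 P2 ℓ h12
  have hc : (a0-b0)+(a1-b1)+(a2-b2) = 0 := by linarith
  have hXY : (a0•P0+a1•P1+a2•P2) - (b0•P0+b1•P1+b2•P2)
      = (a0-b0)•P0 + (a1-b1)•P1 + (a2-b2)•P2 := by module
  rw [dist_eq_norm, hXY, ← real_inner_self_eq_norm_sq]
  simp only [inner_add_left, inner_add_right, real_inner_smul_left, real_inner_smul_right]
  linear_combination (-((a0-b0)*(a1-b1)))*e01 + (-((a0-b0)*(a2-b2)))*e02 + (-((a1-b1)*(a2-b2)))*e12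
    + ((a0-b0)*⟪P0,P0⟫ + (a1-b1)*⟪P1,P1⟫ + (a2-b2)*⟪P2,P2⟫
       - ℓ^2*((a0-b0)+(a1-b1)+(a2-b2))/2) * hc

lemma norm_sq_formula4 (ℓ : ℝ) (P0 P1 P2 P3 : E3)
    (h01 : dist P0 P1 = ℓ) (h02 : dist P0 P2 = ℓ) (h03 : dist P0 P3 = ℓ)
    (h12 : dist P1 P2 = ℓ) (h13 : dist P1 P3 = ℓ) (h23 : dist P2 P3 = ℓ)
    (c0 c1 c2 c3 : ℝ) (hc : c0+c1+c2+c3 = 0) :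
    ‖c0•P0 + c1•P1 + c2•P2 + c3•P3‖^2 = ℓ^2/2*(c0^2+c1^2+c2^2+c3^2) := by
  have e01 := inner_dist_eq P0 P1 ℓ h01
  have e02 := inner_dist_eq P0 P2 ℓ h02
  have e03 := inner_dist_eq P0 P3 ℓ h03
  have e12 := inner_dist_eq P1 P2 ℓ h12
  have e13 := inner_dist_eq P1 P3 ℓ h13
  have e23 := inner_dist_eq P2 P3 ℓ h23
  rw [← real_inner_self_eq_norm_sq]
  simp only [inner_add_left, inner_add_right, real_inner_smul_left, real_inner_smul_right]
  linear_combination (-(c0*c1))*e01 + (-(c0*c2))*e02 + (-(c0*c3))*e03 + (-(c1*c2))*e12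
    + (-(c1*c3))*e13 + (-(c2*c3))*e23
    + (c0*⟪P0,P0⟫ + c1*⟪P1,P1⟫ + c2*⟪P2,P2⟫ + c3*⟪P3,P3⟫
       - ℓ^2*(c0+c1+c2+c3)/2) * hc

lemma frontier_rep (ℓ : ℝ) (hℓ : 0 < ℓ) (p : Fin 4 → E3)
    (hdist : ∀ i j, i ≠ j → dist (p i) (p j) = ℓ) :
    ∀ q ∈ frontier (convexHull ℝ (Set.range p)),
    ∃ a0 a1 a2 a3 : ℝ, 0 ≤ a0 ∧ 0 ≤ a1 ∧ 0 ≤ a2 ∧ 0 ≤ a3 ∧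
      a0 + a1 + a2 + a3 = 1 ∧ (a0 = 0 ∨ a1 = 0 ∨ a2 = 0 ∨ a3 = 0) ∧
      q = a0 • p 0 + a1 • p 1 + a2 • p 2 + a3 • p 3 := by
  have hind : AffineIndependent ℝ p := by
    rw [affineIndependent_iff]
    intro s w hsum hcomb
    set w' : Fin 4 → ℝ := fun i => if i ∈ s then w i else 0 with hw'
    have hsum' : w' 0 + w' 1 + w' 2 + w' 3 = 0 := by
      have : ∑ i : Fin 4, w' i = ∑ i ∈ s, w i := by
        rw [Finset.sum_ite_mem, Finset.univ_inter]
      rw [Fin.sum_univ_four] at this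
      rw [this, hsum]
    have hcomb' : w' 0 • p 0 + w' 1 • p 1 + w' 2 • p 2 + w' 3 • p 3 = 0 := by
      have : ∑ i : Fin 4, w' i • p i = ∑ i ∈ s, w i • p i := by
        calc ∑ i : Fin 4, w' i • p i
            = ∑ i : Fin 4, (if i ∈ s then w i • p i else (0:EuclideanSpace ℝ (Fin 3))) := by
              apply Finset.sum_congr rfl
              intro i _
              by_cases h : i ∈ s <;> simp [hw', h]
          _ = ∑ i ∈ s, w i • p i := by rw [Finset.sum_ite_mem, Finset.univ_inter]
      rw [Fin.sum_univ_four] at this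
      rw [this, hcomb]
    have hnorm := norm_sq_formula4 ℓ (p 0) (p 1) (p 2) (p 3)
      (hdist 0 1 (by decide)) (hdist 0 2 (by decide)) (hdist 0 3 (by decide))
      (hdist 1 2 (by decide)) (hdist 1 3 (by decide)) (hdist 2 3 (by decide))
      (w' 0) (w' 1) (w' 2) (w' 3) hsum'
    rw [hcomb'] at hnorm
    simp only [norm_zero, ne_eq, OfNat.ofNat_ne_zero, not_false_eq_true, zero_pow] at hnorm
    have hl2 : (0:ℝ) < ℓ^2/2 := by positivity
    have hz : w' 0 ^2 + w' 1 ^2 + w' 2 ^2 + w' 3 ^2 = 0 := by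
      rcases mul_eq_zero.mp hnorm.symm with h | h
      · exact absurd h (ne_of_gt hl2)
      · exact h
    have q0 := sq_nonneg (w' 0); have q1 := sq_nonneg (w' 1)
    have q2 := sq_nonneg (w' 2); have q3 := sq_nonneg (w' 3)
    have h0 : w' 0 = 0 := by
      have : w' 0 ^ 2 = 0 := le_antisymm (by linarith) q0
      exact pow_eq_zero_iff (two_ne_zero) |>.mp this
    have h1 : w' 1 = 0 := by
      have : w' 1 ^ 2 = 0 := le_antisymm (by linarith) q1
      exact pow_eq_zero_iff (two_ne_zero) |>.mp this
    have h2 : w' 2 = 0 := by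
      have : w' 2 ^ 2 = 0 := le_antisymm (by linarith) q2
      exact pow_eq_zero_iff (two_ne_zero) |>.mp this
    have h3 : w' 3 = 0 := by
      have : w' 3 ^ 2 = 0 := le_antisymm (by linarith) q3
      exact pow_eq_zero_iff (two_ne_zero) |>.mp this
    have hzz : ∀ i : Fin 4, w' i = 0 := by
      intro i
      fin_cases i
      · exact h0
      · exact h1
      · exact h2
      · exact h3
    intro i hi
    have := hzz i
    simpa [hw', hi] using this
  have hspan : affineSpan ℝ (Set.range p) = ⊤ := by
    rw [hind.affineSpan_eq_top_iff_card_eq_finrank_add_one]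
    simp [finrank_euclideanSpace_fin]
  let b : AffineBasis (Fin 4) ℝ E3 := ⟨p, hind, hspan⟩
  have hb : ⇑b = p := rfl
  intro q hq
  have hclosed : IsClosed (convexHull ℝ (Set.range p)) :=
    ((Set.finite_range p).isCompact_convexHull ℝ).isClosed
  rw [frontier, hclosed.closure_eq] at hq
  obtain ⟨hqhull, hqint⟩ := hq
  have hnonneg : ∀ i, 0 ≤ b.coord i q := by
    have := b.convexHull_eq_nonneg_coord
    rw [hb] at this
    rw [this] at hqhull
    exact hqhull
  have hzero : ∃ i, b.coord i q = 0 := by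
    have hint := b.interior_convexHull
    rw [hb] at hint
    rw [hint] at hqint
    simp only [mem_setOf_eq, not_forall] at hqint
    obtain ⟨i, hi⟩ := hqint
    exact ⟨i, le_antisymm (not_lt.1 hi) (hnonneg i)⟩
  have hcombo : ∑ i, b.coord i q • p i = q := by
    have := b.linear_combination_coord_eq_self q
    rwa [hb] at this
  have hsum1 : b.coord 0 q + b.coord 1 q + b.coord 2 q + b.coord 3 q = 1 := by
    have := b.sum_coord_apply_eq_one q
    rwa [Fin.sum_univ_four] at this
  refine ⟨b.coord 0 q, b.coord 1 q, b.coord 2 q, b.coord 3 q,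
    hnonneg 0, hnonneg 1, hnonneg 2, hnonneg 3, hsum1, ?_, ?_⟩
  · obtain ⟨i, hi⟩ := hzero
    fin_cases i
    · exact Or.inl hi
    · exact Or.inr (Or.inl hi)
    · exact Or.inr (Or.inr (Or.inl hi))
    · exact Or.inr (Or.inr (Or.inr hi))
  · rw [Fin.sum_univ_four] at hcombo
    exact hcombo.symm




def faceSet (A B C : E3) (u v w : ℝ) : Set E3 :=
  {q : E3 | ∃ a0 a1 a2 : ℝ, 0 ≤ a0 ∧ 0 ≤ a1 ∧ 0 ≤ a2 ∧ a0+a1+a2 = 1 ∧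
     a0*u+a1*v+a2*w = 0 ∧ q = a0 • A + a1 • B + a2 • C}

lemma face_bound (ℓ : ℝ) (hℓ : 0 < ℓ) (A B C : E3)
    (hAB : dist A B = ℓ) (hAC : dist A C = ℓ) (hBC : dist B C = ℓ)
    (u v w : ℝ) (huv : u ≠ v) (D : ℝ) (hD : 0 ≤ D)
    (hpair : ∀ a0 a1 a2 b0 b1 b2 : ℝ, 0 ≤ a0 → 0 ≤ a1 → 0 ≤ a2 → 0 ≤ b0 → 0 ≤ b1 → 0 ≤ b2 →
      a0+a1+a2 = 1 → b0+b1+b2 = 1 → a0*u+a1*v+a2*w = 0 → b0*u+b1*v+b2*w = 0 →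
      ℓ^2/2 * ((a0-b0)^2+(a1-b1)^2+(a2-b2)^2) ≤ D^2) :
    μH[1] (faceSet A B C u v w) ≤ ENNReal.ofReal D := by
  rcases (faceSet A B C u v w).eq_empty_or_nonempty with hem | ⟨q0, b0, b1, b2, hb0, hb1, hb2, hsb, htb, hq0⟩
  · rw [hem]; simp
  · have huv' : u - v ≠ 0 := sub_ne_zero.mpr huv
    apply line_measure_le _ q0 ((v-w) • A + (w-u) • B + (u-v) • C) _ D
    · -- pair bound
      rintro q ⟨a0, a1, a2, ha0, ha1, ha2, hsa, hta, hq⟩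
        q' ⟨c0, c1, c2, hc0, hc1, hc2, hsc, htc, hq'⟩
      have hdsq := dist_sq_formula3 ℓ A B C hAB hAC hBC a0 a1 a2 c0 c1 c2 hsa hsc
      rw [← hq, ← hq'] at hdsq
      have hle := hpair a0 a1 a2 c0 c1 c2 ha0 ha1 ha2 hc0 hc1 hc2 hsa hsc hta htc
      nlinarith [dist_nonneg (x := q) (y := q'), hD]
    · -- line
      rintro q ⟨a0, a1, a2, ha0, ha1, ha2, hsa, hta, hq⟩
      set sv : ℝ := (a2-b2)/(u-v) with hsv
      refine ⟨sv, ?_⟩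
      have e2 : a2 - b2 = sv*(u-v) := by rw [hsv]; field_simp
      have key0 : (u-v)*(a0-b0) = (v-w)*(a2-b2) := by linear_combination hta - htb - v*hsa + v*hsb
      have key1 : (u-v)*(a1-b1) = (w-u)*(a2-b2) := by linear_combination u*hsa - u*hsb - hta + htb
      have e0 : a0 - b0 = sv*(v-w) := by
        rw [hsv]; field_simp; linear_combination key0
      have e1 : a1 - b1 = sv*(w-u) := by
        rw [hsv]; field_simp; linear_combination key1
      rw [hq, hq0]
      rw [show a0 = b0 + sv*(v-w) from by linarith,
          show a1 = b1 + sv*(w-u) from by linarith,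
          show a2 = b2 + sv*(u-v) from by linarith]
      module

lemma face_empty (A B C : E3) (u v w : ℝ)
    (h : (0 < u ∧ 0 < v ∧ 0 < w) ∨ (u < 0 ∧ v < 0 ∧ w < 0)) :
    μH[1] (faceSet A B C u v w) = 0 := by
  have : faceSet A B C u v w = ∅ := by
    rw [eq_empty_iff_forall_notMem]
    rintro q ⟨a0, a1, a2, ha0, ha1, ha2, hsa, hta, -⟩
    rcases h with ⟨h1, h2, h3⟩ | ⟨h1, h2, h3⟩
    · have t1 : 0 ≤ a0*u := mul_nonneg ha0 h1.le
      have t2 : 0 ≤ a1*v := mul_nonneg ha1 h2.le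
      have t3 : 0 ≤ a2*w := mul_nonneg ha2 h3.le
      have z0 : a0*u = 0 := by linarith
      have z1 : a1*v = 0 := by linarith
      have z2 : a2*w = 0 := by linarith
      have : a0 = 0 := by
        rcases mul_eq_zero.mp z0 with h | h
        · exact h
        · exact absurd h (ne_of_gt h1)
      have : a1 = 0 := by
        rcases mul_eq_zero.mp z1 with h | h
        · exact h
        · exact absurd h (ne_of_gt h2)
      have : a2 = 0 := by
        rcases mul_eq_zero.mp z2 with h | h
        · exact h
        · exact absurd h (ne_of_gt h3)
      simp_all
    · have t1 : a0*u ≤ 0 := mul_nonpos_of_nonneg_of_nonpos ha0 h1.le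
      have t2 : a1*v ≤ 0 := mul_nonpos_of_nonneg_of_nonpos ha1 h2.le
      have t3 : a2*w ≤ 0 := mul_nonpos_of_nonneg_of_nonpos ha2 h3.le
      have z0 : a0*u = 0 := by linarith
      have z1 : a1*v = 0 := by linarith
      have z2 : a2*w = 0 := by linarith
      have : a0 = 0 := by
        rcases mul_eq_zero.mp z0 with h | h
        · exact h
        · exact absurd h (ne_of_lt h1)
      have : a1 = 0 := by
        rcases mul_eq_zero.mp z1 with h | h
        · exact h
        · exact absurd h (ne_of_lt h2)
      have : a2 = 0 := by
        rcases mul_eq_zero.mp z2 with h | h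
        · exact h
        · exact absurd h (ne_of_lt h3)
      simp_all
  rw [this]; simp




lemma face_rot (A B C : E3) (u v w : ℝ) : faceSet A B C u v w = faceSet C A B w u v := by
  ext q
  constructor
  · rintro ⟨a0, a1, a2, h0, h1, h2, hs, ht, hq⟩
    exact ⟨a2, a0, a1, h2, h0, h1, by linarith, by linarith, by rw [hq]; module⟩
  · rintro ⟨a0, a1, a2, h0, h1, h2, hs, ht, hq⟩
    exact ⟨a1, a2, a0, h1, h2, h0, by linarith, by linarith, by rw [hq]; module⟩

lemma face_swap (A B C : E3) (u v w : ℝ) : faceSet A B C u v w = faceSet B A C v u w := by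
  ext q
  constructor
  · rintro ⟨a0, a1, a2, h0, h1, h2, hs, ht, hq⟩
    exact ⟨a1, a0, a2, h1, h0, h2, by linarith, by linarith, by rw [hq]; module⟩
  · rintro ⟨a0, a1, a2, h0, h1, h2, hs, ht, hq⟩
    exact ⟨a1, a0, a2, h1, h0, h2, by linarith, by linarith, by rw [hq]; module⟩


lemma face_bound' (ℓ : ℝ) (hℓ : 0 < ℓ) (A B C : E3)
    (hAB : dist A B = ℓ) (hAC : dist A C = ℓ) (hBC : dist B C = ℓ)
    (u v w : ℝ) (hne : u ≠ v ∨ v ≠ w) (D : ℝ) (hD : 0 ≤ D)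
    (hpair : ∀ a0 a1 a2 b0 b1 b2 : ℝ, 0 ≤ a0 → 0 ≤ a1 → 0 ≤ a2 → 0 ≤ b0 → 0 ≤ b1 → 0 ≤ b2 →
      a0+a1+a2 = 1 → b0+b1+b2 = 1 → a0*u+a1*v+a2*w = 0 → b0*u+b1*v+b2*w = 0 →
      ℓ^2/2 * ((a0-b0)^2+(a1-b1)^2+(a2-b2)^2) ≤ D^2) :
    μH[1] (faceSet A B C u v w) ≤ ENNReal.ofReal D := by
  by_cases huv : u = v
  · have hvw : v ≠ w := by tauto
    have hwu : w ≠ u := fun h => hvw (huv ▸ h.symm)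
    rw [face_rot]
    apply face_bound ℓ hℓ C A B (by rw [dist_comm]; exact hAC) (by rw [dist_comm]; exact hBC)
      hAB w u v hwu D hD
    intro a0 a1 a2 b0 b1 b2 ha0 ha1 ha2 hb0 hb1 hb2 hsa hsb hta htb
    have := hpair a1 a2 a0 b1 b2 b0 ha1 ha2 ha0 hb1 hb2 hb0 (by linarith) (by linarith)
      (by linarith) (by linarith)
    nlinarith [this]
  · exact face_bound ℓ hℓ A B C hAB hAC hBC u v w huv D hD hpair

lemma measure_face_generic (ℓ : ℝ) (hℓ : 0 < ℓ) (A B C : E3)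
    (hAB : dist A B = ℓ) (hAC : dist A C = ℓ) (hBC : dist B C = ℓ)
    (u v w : ℝ) (huv : u ≠ v) :
    μH[1] (faceSet A B C u v w) ≤ ENNReal.ofReal ℓ := by
  apply face_bound' ℓ hℓ A B C hAB hAC hBC u v w (Or.inl huv) ℓ hℓ.le
  intro a0 a1 a2 b0 b1 b2 ha0 ha1 ha2 hb0 hb1 hb2 hsa hsb _ _
  have h := pair_generic a0 a1 a2 b0 b1 b2 ha0 ha1 ha2 hb0 hb1 hb2 hsa hsb
  nlinarith [sq_nonneg ℓ]

lemma measure_face_point (ℓ : ℝ) (hℓ : 0 < ℓ) (A B C : E3)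
    (hAB : dist A B = ℓ) (hAC : dist A C = ℓ) (hBC : dist B C = ℓ)
    (v w : ℝ) (hvw : 0 < v*w) :
    μH[1] (faceSet A B C 0 v w) ≤ ENNReal.ofReal 0 := by
  have hv : v ≠ 0 := by
    intro h; rw [h] at hvw; simp at hvw
  apply face_bound' ℓ hℓ A B C hAB hAC hBC 0 v w (Or.inl (Ne.symm hv)) 0 le_rfl
  intro a0 a1 a2 b0 b1 b2 ha0 ha1 ha2 hb0 hb1 hb2 hsa hsb hta htb
  have h := pair_point v w a0 a1 a2 b0 b1 b2 hvw ha1 ha2 hb1 hb2 hsa hsb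
    (by linarith) (by linarith)
  nlinarith [sq_nonneg ℓ]

lemma measure_face_quadA (ℓ : ℝ) (hℓ : 0 < ℓ) (A B C : E3)
    (hAB : dist A B = ℓ) (hAC : dist A C = ℓ) (hBC : dist B C = ℓ)
    (u v w : ℝ) (hu : 0 < u) (huv : u ≤ v) (hw : w < 0) :
    μH[1] (faceSet A B C u v w) ≤ ENNReal.ofReal (ℓ*(-w)/(u-w)) := by
  have hK : 0 < u - w := by linarith
  have hD : 0 ≤ ℓ*(-w)/(u-w) := div_nonneg (mul_nonneg hℓ.le (by linarith)) hK.le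
  apply face_bound' ℓ hℓ A B C hAB hAC hBC u v w (Or.inr (by intro h; rw [h] at huv; linarith)) _ hD
  intro a0 a1 a2 b0 b1 b2 ha0 ha1 ha2 hb0 hb1 hb2 hsa hsb hta htb
  have h := pair_quadA u v w a0 a1 a2 b0 b1 b2 hu huv hw ha0 ha1 ha2 hb0 hb1 hb2 hsa hsb hta htb
  rw [div_pow, le_div_iff₀ (pow_pos hK 2)]
  have h2 := mul_le_mul_of_nonneg_left h (by positivity : (0:ℝ) ≤ ℓ^2/2)
  nlinarith [h2]

lemma measure_face_quadB (ℓ : ℝ) (hℓ : 0 < ℓ) (A B C : E3)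
    (hAB : dist A B = ℓ) (hAC : dist A C = ℓ) (hBC : dist B C = ℓ)
    (u v w : ℝ) (hu : 0 < u) (hvw : v ≤ w) (hw : w < 0) :
    μH[1] (faceSet A B C u v w) ≤ ENNReal.ofReal (ℓ*u/(u-w)) := by
  have hK : 0 < u - w := by linarith
  have hD : 0 ≤ ℓ*u/(u-w) := div_nonneg (mul_nonneg hℓ.le hu.le) hK.le
  apply face_bound' ℓ hℓ A B C hAB hAC hBC u v w (Or.inl (by intro h; rw [h] at hu; linarith)) _ hD
  intro a0 a1 a2 b0 b1 b2 ha0 ha1 ha2 hb0 hb1 hb2 hsa hsb hta htb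
  have h := pair_quadB u v w a0 a1 a2 b0 b1 b2 hu hvw hw ha0 ha1 ha2 hb0 hb1 hb2 hsa hsb hta htb
  rw [div_pow, le_div_iff₀ (pow_pos hK 2)]
  have h2 := mul_le_mul_of_nonneg_left h (by positivity : (0:ℝ) ≤ ℓ^2/2)
  nlinarith [h2]

lemma finish4 (ℓ : ℝ) (S F1 F2 F3 F4 : Set E3) (hcover : S ⊆ F1 ∪ F2 ∪ F3 ∪ F4)
    (B1 B2 B3 B4 : ℝ)
    (h1 : μH[1] F1 ≤ ENNReal.ofReal B1) (h2 : μH[1] F2 ≤ ENNReal.ofReal B2)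
    (h3 : μH[1] F3 ≤ ENNReal.ofReal B3) (h4 : μH[1] F4 ≤ ENNReal.ofReal B4)
    (n1 : 0 ≤ B1) (n2 : 0 ≤ B2) (n3 : 0 ≤ B3) (n4 : 0 ≤ B4)
    (hsum : B1+B2+B3+B4 ≤ 3*ℓ) :
    μH[1] S ≤ ENNReal.ofReal (3*ℓ) := by
  calc μH[1] S ≤ μH[1] (F1 ∪ F2 ∪ F3 ∪ F4) := measure_mono hcover
    _ ≤ μH[1] (F1 ∪ F2 ∪ F3) + μH[1] F4 := measure_union_le _ _
    _ ≤ (μH[1] (F1 ∪ F2) + μH[1] F3) + μH[1] F4 := by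
        gcongr
        exact measure_union_le _ _
    _ ≤ ((μH[1] F1 + μH[1] F2) + μH[1] F3) + μH[1] F4 := by
        gcongr
        exact measure_union_le _ _
    _ ≤ ((ENNReal.ofReal B1 + ENNReal.ofReal B2) + ENNReal.ofReal B3) + ENNReal.ofReal B4 := by
        gcongr
    _ = ENNReal.ofReal (B1+B2+B3+B4) := by
        rw [← ENNReal.ofReal_add n1 n2, ← ENNReal.ofReal_add (by linarith) n3,
          ← ENNReal.ofReal_add (by linarith) n4]
    _ ≤ ENNReal.ofReal (3*ℓ) := ENNReal.ofReal_le_ofReal hsum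

lemma aux_main (ℓ : ℝ) (hℓ : 0 < ℓ) (p : Fin 4 → E3)
    (hdist : ∀ i j, i ≠ j → dist (p i) (p j) = ℓ)
    (t0 t1 t2 t3 : ℝ) (m01 : t0 ≤ t1) (m12 : t1 ≤ t2) (m23 : t2 ≤ t3)
    (hz02 : ¬(t0 = 0 ∧ t2 = 0)) (hz13 : ¬(t1 = 0 ∧ t3 = 0))
    (S : Set E3)
    (hrep : ∀ q ∈ S, ∃ a0 a1 a2 a3 : ℝ, 0 ≤ a0 ∧ 0 ≤ a1 ∧ 0 ≤ a2 ∧ 0 ≤ a3 ∧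
       a0+a1+a2+a3 = 1 ∧ a0*t0+a1*t1+a2*t2+a3*t3 = 0 ∧
       (a0 = 0 ∨ a1 = 0 ∨ a2 = 0 ∨ a3 = 0) ∧
       q = a0 • p 0 + a1 • p 1 + a2 • p 2 + a3 • p 3) :
    μH[1] S ≤ ENNReal.ofReal (3*ℓ) := by
  have d01 := hdist 0 1 (by decide); have d02 := hdist 0 2 (by decide)
  have d03 := hdist 0 3 (by decide); have d12 := hdist 1 2 (by decide)
  have d13 := hdist 1 3 (by decide); have d23 := hdist 2 3 (by decide)
  have d10 := hdist 1 0 (by decide); have d20 := hdist 2 0 (by decide)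
  have d30 := hdist 3 0 (by decide); have d21 := hdist 2 1 (by decide)
  have d31 := hdist 3 1 (by decide); have d32 := hdist 3 2 (by decide)
  have hcover : S ⊆ faceSet (p 1) (p 2) (p 3) t1 t2 t3 ∪ faceSet (p 0) (p 2) (p 3) t0 t2 t3
      ∪ faceSet (p 0) (p 1) (p 3) t0 t1 t3 ∪ faceSet (p 0) (p 1) (p 2) t0 t1 t2 := by
    intro q hq
    obtain ⟨a0, a1, a2, a3, n0, n1, n2, n3, hs, ht, hzero, hq'⟩ := hrep q hq
    rcases hzero with h | h | h | h
    · exact Or.inl (Or.inl (Or.inl ⟨a1, a2, a3, n1, n2, n3, by linarith,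
        by rw [h] at ht; linarith, by rw [hq', h]; module⟩))
    · exact Or.inl (Or.inl (Or.inr ⟨a0, a2, a3, n0, n2, n3, by linarith,
        by rw [h] at ht; linarith, by rw [hq', h]; module⟩))
    · exact Or.inl (Or.inr ⟨a0, a1, a3, n0, n1, n3, by linarith,
        by rw [h] at ht; linarith, by rw [hq', h]; module⟩)
    · exact Or.inr ⟨a0, a1, a2, n0, n1, n2, by linarith,
        by rw [h] at ht; linarith, by rw [hq', h]; module⟩
  rcases lt_trichotomy t1 0 with ht1 | ht1 | ht1
  · -- t1 < 0
    have ht0 : t0 < 0 := by linarith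
    rcases lt_trichotomy t2 0 with ht2 | ht2 | ht2
    · -- t2 < 0
      rcases lt_trichotomy t3 0 with ht3 | ht3 | ht3
      · -- all negative : everything empty
        refine finish4 ℓ S _ _ _ _ hcover 0 0 0 0 ?_ ?_ ?_ ?_ le_rfl le_rfl le_rfl le_rfl
          (by linarith)
        · rw [face_empty _ _ _ _ _ _ (Or.inr ⟨ht1, ht2, ht3⟩)]; exact zero_le
        · rw [face_empty _ _ _ _ _ _ (Or.inr ⟨ht0, ht2, ht3⟩)]; exact zero_le
        · rw [face_empty _ _ _ _ _ _ (Or.inr ⟨ht0, ht1, ht3⟩)]; exact zero_le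
        · rw [face_empty _ _ _ _ _ _ (Or.inr ⟨ht0, ht1, ht2⟩)]; exact zero_le
      · -- t3 = 0 : pattern (-,-,-,0)
        refine finish4 ℓ S _ _ _ _ hcover 0 0 0 0 ?_ ?_ ?_ ?_ le_rfl le_rfl le_rfl le_rfl
          (by linarith)
        · rw [face_rot (p 1) (p 2) (p 3) t1 t2 t3, ht3]
          exact measure_face_point ℓ hℓ _ _ _ d31 d32 d12 t1 t2 (mul_pos_of_neg_of_neg ht1 ht2)
        · rw [face_rot (p 0) (p 2) (p 3) t0 t2 t3, ht3]
          exact measure_face_point ℓ hℓ _ _ _ d30 d32 d02 t0 t2 (mul_pos_of_neg_of_neg ht0 ht2)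
        · rw [face_rot (p 0) (p 1) (p 3) t0 t1 t3, ht3]
          exact measure_face_point ℓ hℓ _ _ _ d30 d31 d01 t0 t1 (mul_pos_of_neg_of_neg ht0 ht1)
        · rw [face_empty _ _ _ _ _ _ (Or.inr ⟨ht0, ht1, ht2⟩)]; exact zero_le
      · -- t3 > 0 : pattern (-,-,-,+) triangle
        refine finish4 ℓ S _ _ _ _ hcover ℓ ℓ ℓ 0 ?_ ?_ ?_ ?_ hℓ.le hℓ.le hℓ.le le_rfl
          (by linarith)
        · rw [face_rot (p 1) (p 2) (p 3) t1 t2 t3]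
          exact measure_face_generic ℓ hℓ _ _ _ d31 d32 d12 t3 t1 t2 (by linarith [ht3, ht1])
        · rw [face_rot (p 0) (p 2) (p 3) t0 t2 t3]
          exact measure_face_generic ℓ hℓ _ _ _ d30 d32 d02 t3 t0 t2 (by linarith [ht3, ht0])
        · rw [face_rot (p 0) (p 1) (p 3) t0 t1 t3]
          exact measure_face_generic ℓ hℓ _ _ _ d30 d31 d01 t3 t0 t1 (by linarith [ht3, ht0])
        · rw [face_empty _ _ _ _ _ _ (Or.inr ⟨ht0, ht1, ht2⟩)]; exact zero_le
    · -- t2 = 0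
      rcases lt_trichotomy t3 0 with ht3 | ht3 | ht3
      · linarith
      · -- (-,-,0,0)
        refine finish4 ℓ S _ _ _ _ hcover ℓ ℓ 0 0 ?_ ?_ ?_ ?_ hℓ.le hℓ.le le_rfl le_rfl
          (by linarith)
        · exact measure_face_generic ℓ hℓ _ _ _ d12 d13 d23 t1 t2 t3 (by rw [ht2]; exact ne_of_lt ht1)
        · exact measure_face_generic ℓ hℓ _ _ _ d02 d03 d23 t0 t2 t3 (by rw [ht2]; exact ne_of_lt ht0)
        · rw [face_rot (p 0) (p 1) (p 3) t0 t1 t3, ht3]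
          exact measure_face_point ℓ hℓ _ _ _ d30 d31 d01 t0 t1 (mul_pos_of_neg_of_neg ht0 ht1)
        · rw [face_rot (p 0) (p 1) (p 2) t0 t1 t2, ht2]
          exact measure_face_point ℓ hℓ _ _ _ d20 d21 d01 t0 t1 (mul_pos_of_neg_of_neg ht0 ht1)
      · -- (-,-,0,+)
        refine finish4 ℓ S _ _ _ _ hcover ℓ ℓ ℓ 0 ?_ ?_ ?_ ?_ hℓ.le hℓ.le hℓ.le le_rfl
          (by linarith)
        · exact measure_face_generic ℓ hℓ _ _ _ d12 d13 d23 t1 t2 t3 (by rw [ht2]; exact ne_of_lt ht1)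
        · exact measure_face_generic ℓ hℓ _ _ _ d02 d03 d23 t0 t2 t3 (by rw [ht2]; exact ne_of_lt ht0)
        · rw [face_rot (p 0) (p 1) (p 3) t0 t1 t3]
          exact measure_face_generic ℓ hℓ _ _ _ d30 d31 d01 t3 t0 t1 (by linarith [ht3, ht0])
        · rw [face_rot (p 0) (p 1) (p 2) t0 t1 t2, ht2]
          exact measure_face_point ℓ hℓ _ _ _ d20 d21 d01 t0 t1 (mul_pos_of_neg_of_neg ht0 ht1)
    · -- t2 > 0 : quadrilateral case (-,-,+,+)
      have ht3 : 0 < t3 := by linarith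
      have hB1 : (0:ℝ) ≤ ℓ*(-t1)/(t2-t1) := div_nonneg (mul_nonneg hℓ.le (by linarith)) (by linarith)
      have hB2 : (0:ℝ) ≤ ℓ*(-t0)/(t2-t0) := div_nonneg (mul_nonneg hℓ.le (by linarith)) (by linarith)
      have hB3 : (0:ℝ) ≤ ℓ*t3/(t3-t1) := div_nonneg (mul_nonneg hℓ.le (by linarith)) (by linarith)
      have hB4 : (0:ℝ) ≤ ℓ*t2/(t2-t1) := div_nonneg (mul_nonneg hℓ.le (by linarith)) (by linarith)
      refine finish4 ℓ S _ _ _ _ hcover (ℓ*(-t1)/(t2-t1)) (ℓ*(-t0)/(t2-t0)) (ℓ*t3/(t3-t1))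
        (ℓ*t2/(t2-t1)) ?_ ?_ ?_ ?_ hB1 hB2 hB3 hB4 ?_
      · rw [face_rot (p 1) (p 2) (p 3) t1 t2 t3, face_rot (p 3) (p 1) (p 2) t3 t1 t2]
        exact measure_face_quadA ℓ hℓ _ _ _ d23 d21 d31 t2 t3 t1 ht2 m23 ht1
      · rw [face_rot (p 0) (p 2) (p 3) t0 t2 t3, face_rot (p 3) (p 0) (p 2) t3 t0 t2]
        exact measure_face_quadA ℓ hℓ _ _ _ d23 d20 d30 t2 t3 t0 ht2 m23 ht0
      · rw [face_rot (p 0) (p 1) (p 3) t0 t1 t3]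
        exact measure_face_quadB ℓ hℓ _ _ _ d30 d31 d01 t3 t0 t1 ht3 m01 ht1
      · rw [face_rot (p 0) (p 1) (p 2) t0 t1 t2]
        exact measure_face_quadB ℓ hℓ _ _ _ d20 d21 d01 t2 t0 t1 ht2 m01 ht1
      · -- sum of the four bounds is at most 3ℓ
        have e1 : ℓ*(-t1)/(t2-t1) + ℓ*t2/(t2-t1) = ℓ := by
          rw [← add_div]
          rw [div_eq_iff (by linarith : t2 - t1 ≠ 0)]
          ring
        have e2 : ℓ*(-t0)/(t2-t0) ≤ ℓ := by
          rw [div_le_iff₀ (by linarith : (0:ℝ) < t2 - t0)]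
          nlinarith
        have e3 : ℓ*t3/(t3-t1) ≤ ℓ := by
          rw [div_le_iff₀ (by linarith : (0:ℝ) < t3 - t1)]
          nlinarith
        linarith
  · -- t1 = 0
    rcases lt_trichotomy t2 0 with ht2 | ht2 | ht2
    · linarith
    · -- t1 = t2 = 0 : trick case (-,0,0,+)
      have ht0 : t0 < 0 := by
        rcases lt_trichotomy t0 0 with h | h | h
        · exact h
        · exact absurd ⟨h, ht2⟩ hz02
        · linarith
      have ht3 : 0 < t3 := by
        rcases lt_trichotomy t3 0 with h | h | h
        · linarith
        · exact absurd ⟨ht1, h⟩ hz13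
        · exact h
      have hcover2 : S ⊆ faceSet (p 3) (p 1) (p 2) t3 t1 t2 ∪ faceSet (p 0) (p 2) (p 3) t0 t2 t3
          ∪ faceSet (p 0) (p 1) (p 3) t0 t1 t3 ∪ (∅ : Set E3) := by
        intro q hq
        obtain ⟨a0, a1, a2, a3, n0, n1, n2, n3, hs, ht, hzero, hq'⟩ := hrep q hq
        rcases hzero with h | h | h | h
        · exact Or.inl (Or.inl (Or.inl ⟨a3, a1, a2, n3, n1, n2, by linarith,
            by rw [h] at ht; linarith, by rw [hq', h]; module⟩))
        · exact Or.inl (Or.inl (Or.inr ⟨a0, a2, a3, n0, n2, n3, by linarith,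
            by rw [h] at ht; linarith, by rw [hq', h]; module⟩))
        · exact Or.inl (Or.inr ⟨a0, a1, a3, n0, n1, n3, by linarith,
            by rw [h] at ht; linarith, by rw [hq', h]; module⟩)
        · -- a3 = 0 : then a0 t0 = 0 forces a0 = 0
          have hz : a0 * t0 = 0 := by rw [h] at ht; rw [ht1, ht2] at ht; linarith
          have ha0 : a0 = 0 := by
            rcases mul_eq_zero.mp hz with h' | h'
            · exact h'
            · exact absurd h' (ne_of_lt ht0)
          exact Or.inl (Or.inl (Or.inl ⟨a3, a1, a2, n3, n1, n2, by linarith,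
            by rw [h, ht1, ht2]; linarith, by rw [hq', h, ha0]; module⟩))
      refine finish4 ℓ S _ _ _ _ hcover2 ℓ ℓ ℓ 0 ?_ ?_ ?_ ?_ hℓ.le hℓ.le hℓ.le le_rfl
        (by linarith)
      · exact measure_face_generic ℓ hℓ _ _ _ d31 d32 d12 t3 t1 t2 (by rw [ht1]; exact ne_of_gt ht3)
      · exact measure_face_generic ℓ hℓ _ _ _ d02 d03 d23 t0 t2 t3 (by rw [ht2]; exact ne_of_lt ht0)
      · exact measure_face_generic ℓ hℓ _ _ _ d01 d03 d13 t0 t1 t3 (by rw [ht1]; exact ne_of_lt ht0)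
      · rw [measure_empty]; exact zero_le
    · -- t1 = 0, t2 > 0
      have ht3 : 0 < t3 := by linarith
      rcases lt_trichotomy t0 0 with ht0 | ht0 | ht0
      · -- (-,0,+,+)
        refine finish4 ℓ S _ _ _ _ hcover 0 ℓ ℓ ℓ ?_ ?_ ?_ ?_ le_rfl hℓ.le hℓ.le hℓ.le
          (by linarith)
        · rw [ht1]
          exact measure_face_point ℓ hℓ _ _ _ d12 d13 d23 t2 t3 (mul_pos ht2 ht3)
        · exact measure_face_generic ℓ hℓ _ _ _ d02 d03 d23 t0 t2 t3 (by linarith [ht0, ht2])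
        · exact measure_face_generic ℓ hℓ _ _ _ d01 d03 d13 t0 t1 t3 (by rw [ht1]; exact ne_of_lt ht0)
        · exact measure_face_generic ℓ hℓ _ _ _ d01 d02 d12 t0 t1 t2 (by rw [ht1]; exact ne_of_lt ht0)
      · -- (0,0,+,+)
        refine finish4 ℓ S _ _ _ _ hcover 0 0 ℓ ℓ ?_ ?_ ?_ ?_ le_rfl le_rfl hℓ.le hℓ.le
          (by linarith)
        · rw [ht1]
          exact measure_face_point ℓ hℓ _ _ _ d12 d13 d23 t2 t3 (mul_pos ht2 ht3)
        · rw [ht0]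
          exact measure_face_point ℓ hℓ _ _ _ d02 d03 d23 t2 t3 (mul_pos ht2 ht3)
        · rw [face_rot (p 0) (p 1) (p 3) t0 t1 t3]
          exact measure_face_generic ℓ hℓ _ _ _ d30 d31 d01 t3 t0 t1 (by rw [ht0]; exact ne_of_gt ht3)
        · rw [face_rot (p 0) (p 1) (p 2) t0 t1 t2]
          exact measure_face_generic ℓ hℓ _ _ _ d20 d21 d01 t2 t0 t1 (by rw [ht0]; exact ne_of_gt ht2)
      · linarith
  · -- t1 > 0
    have ht2 : 0 < t2 := by linarith
    have ht3 : 0 < t3 := by linarith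
    rcases lt_trichotomy t0 0 with ht0 | ht0 | ht0
    · -- (-,+,+,+)
      refine finish4 ℓ S _ _ _ _ hcover 0 ℓ ℓ ℓ ?_ ?_ ?_ ?_ le_rfl hℓ.le hℓ.le hℓ.le
        (by linarith)
      · rw [face_empty _ _ _ _ _ _ (Or.inl ⟨ht1, ht2, ht3⟩)]; exact zero_le
      · exact measure_face_generic ℓ hℓ _ _ _ d02 d03 d23 t0 t2 t3 (by linarith [ht0, ht2])
      · exact measure_face_generic ℓ hℓ _ _ _ d01 d03 d13 t0 t1 t3 (by linarith [ht0, ht1])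
      · exact measure_face_generic ℓ hℓ _ _ _ d01 d02 d12 t0 t1 t2 (by linarith [ht0, ht1])
    · -- (0,+,+,+)
      refine finish4 ℓ S _ _ _ _ hcover 0 0 0 0 ?_ ?_ ?_ ?_ le_rfl le_rfl le_rfl le_rfl
        (by linarith)
      · rw [face_empty _ _ _ _ _ _ (Or.inl ⟨ht1, ht2, ht3⟩)]; exact zero_le
      · rw [ht0]
        exact measure_face_point ℓ hℓ _ _ _ d02 d03 d23 t2 t3 (mul_pos ht2 ht3)
      · rw [ht0]
        exact measure_face_point ℓ hℓ _ _ _ d01 d03 d13 t1 t3 (mul_pos ht1 ht3)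
      · rw [ht0]
        exact measure_face_point ℓ hℓ _ _ _ d01 d02 d12 t1 t2 (mul_pos ht1 ht2)
    · -- all positive
      refine finish4 ℓ S _ _ _ _ hcover 0 0 0 0 ?_ ?_ ?_ ?_ le_rfl le_rfl le_rfl le_rfl
        (by linarith)
      · rw [face_empty _ _ _ _ _ _ (Or.inl ⟨ht1, ht2, ht3⟩)]; exact zero_le
      · rw [face_empty _ _ _ _ _ _ (Or.inl ⟨ht0, ht2, ht3⟩)]; exact zero_le
      · rw [face_empty _ _ _ _ _ _ (Or.inl ⟨ht0, ht1, ht3⟩)]; exact zero_le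
      · rw [face_empty _ _ _ _ _ _ (Or.inl ⟨ht0, ht1, ht2⟩)]; exact zero_le

/-- Let `Q ⊂ ℝ³` be a solid regular tetrahedron of side length `ℓ > 0`
(the convex hull of four points pairwise at distance `ℓ`) and let `P` be an affine plane
(`{x | ⟪x, n⟫ = c}` with `n ≠ 0`) containing no face of `Q`. Then the length
(1-dimensional Hausdorff measure) of `P ∩ ∂Q` is at most `3ℓ`. -/
theorem length_plane_inter_tetrahedron_boundary_le
    (ℓ : ℝ) (hℓ : 0 < ℓ) (p : Fin 4 → EuclideanSpace ℝ (Fin 3))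
    (hdist : ∀ i j, i ≠ j → dist (p i) (p j) = ℓ)
    (n : EuclideanSpace ℝ (Fin 3)) (hn : n ≠ 0) (c : ℝ)
    (P : Set (EuclideanSpace ℝ (Fin 3))) (hP : P = {x | ⟪x, n⟫ = c})
    (hface : ∀ i j k : Fin 4, i ≠ j → j ≠ k → i ≠ k →
      ¬ ({p i, p j, p k} : Set (EuclideanSpace ℝ (Fin 3))) ⊆ P) :
    μH[1] (P ∩ frontier (convexHull ℝ (Set.range p))) ≤ ENNReal.ofReal (3 * ℓ) := by
  have hPmem : ∀ x, x ∈ P ↔ ⟪x, n⟫ = c := by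
    intro x; rw [hP]; rfl
  set t : Fin 4 → ℝ := fun i => ⟪p i, n⟫ - c with htdef
  set σ : Equiv.Perm (Fin 4) := Tuple.sort t with hσ
  have hmono : Monotone (t ∘ σ) := Tuple.monotone_sort t
  set p' : Fin 4 → EuclideanSpace ℝ (Fin 3) := p ∘ σ with hp'
  have hdist' : ∀ i j, i ≠ j → dist (p' i) (p' j) = ℓ := by
    intro i j hij
    exact hdist (σ i) (σ j) (fun h => hij (σ.injective h))
  have hrange : Set.range p' = Set.range p := σ.surjective.range_comp p
  have hptP : ∀ i : Fin 4, t i = 0 ↔ p i ∈ P := by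
    intro i
    rw [hPmem, htdef]
    constructor
    · intro h; have := sub_eq_zero.mp h; exact this
    · intro h; simp [h]
  -- at most two of the sorted values are zero, in the sense needed
  have hz3 : ∀ i j k : Fin 4, i ≠ j → j ≠ k → i ≠ k →
      ¬(t (σ i) = 0 ∧ t (σ j) = 0 ∧ t (σ k) = 0) := by
    intro i j k hij hjk hik ⟨hzi, hzj, hzk⟩
    apply hface (σ i) (σ j) (σ k)
      (fun h => hij (σ.injective h)) (fun h => hjk (σ.injective h)) (fun h => hik (σ.injective h))
    intro x hx
    rcases hx with h | h | h
    · rw [h]; exact (hptP (σ i)).mp hzi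
    · rw [h]; exact (hptP (σ j)).mp hzj
    · rw [h]; exact (hptP (σ k)).mp hzk
  have m01 : t (σ 0) ≤ t (σ 1) := hmono (by decide : (0:Fin 4) ≤ 1)
  have m12 : t (σ 1) ≤ t (σ 2) := hmono (by decide : (1:Fin 4) ≤ 2)
  have m23 : t (σ 2) ≤ t (σ 3) := hmono (by decide : (2:Fin 4) ≤ 3)
  have hz02 : ¬(t (σ 0) = 0 ∧ t (σ 2) = 0) := by
    rintro ⟨h0, h2⟩
    have h1 : t (σ 1) = 0 := le_antisymm (h2 ▸ m12) (h0 ▸ m01)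
    exact hz3 0 1 2 (by decide) (by decide) (by decide) ⟨h0, h1, h2⟩
  have hz13 : ¬(t (σ 1) = 0 ∧ t (σ 3) = 0) := by
    rintro ⟨h1, h3⟩
    have h2 : t (σ 2) = 0 := le_antisymm (h3 ▸ m23) (h1 ▸ m12)
    exact hz3 1 2 3 (by decide) (by decide) (by decide) ⟨h1, h2, h3⟩
  apply aux_main ℓ hℓ p' hdist' (t (σ 0)) (t (σ 1)) (t (σ 2)) (t (σ 3)) m01 m12 m23 hz02 hz13
  -- the representation property
  intro q hq
  obtain ⟨hqP, hqfr⟩ := hq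
  rw [← hrange] at hqfr
  obtain ⟨a0, a1, a2, a3, n0, n1, n2, n3, hs, hzero, hq'⟩ :=
    frontier_rep ℓ hℓ p' hdist' q hqfr
  refine ⟨a0, a1, a2, a3, n0, n1, n2, n3, hs, ?_, hzero, hq'⟩
  have hinner : ⟪q, n⟫ = a0*⟪p' 0, n⟫ + a1*⟪p' 1, n⟫ + a2*⟪p' 2, n⟫ + a3*⟪p' 3, n⟫ := by
    rw [hq']
    simp only [inner_add_left, real_inner_smul_left]
  have hqc : ⟪q, n⟫ = c := (hPmem q).mp hqP
  have ht : ∀ i : Fin 4, t (σ i) = ⟪p' i, n⟫ - c := fun i => rfl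
  rw [ht 0, ht 1, ht 2, ht 3]
  rw [hqc] at hinner
  linear_combination (-1)*hinner - c*hs
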